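/- (Convolution identity for fundamental functions.) Let λ₀,...,λ_{n+m} be pairwise distinct complex numbers. Then for all y, ∫₀ʸ Φ_{(λ₀,...,λₙ)}(t) · Φ_{(λ_{n+1},...,λ_{n+m})}(y-t) dt = Φ_{(λ₀,...,λ_{n+m})}(y), where Φ_{(μ₀,...,μ_N)}(t) = (1/2πi)∮ e^{tz}/((z-μ₀)···(z-μ_N)) dz is the fundamental exponential polynomial. -/
import Mathlib

open Complex Finset

/-- The fundamental exponential polynomial for pairwise distinct complex frequencies. -/
noncomputable def fundPhiC {N : ℕ} (μ : Fin N → ℂ) (t : ℝ) : ℂ :=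
  ∑ j, Complex.exp (μ j * t) / ∏ k ∈ Finset.univ.erase j, (μ j - μ k)

lemma pf_aux {ι : Type*} [Fintype ι] [DecidableEq ι] [Nonempty ι] (v : ι → ℂ)
    (hv : Function.Injective v) (x : ℂ) (hx : ∀ i, x ≠ v i) :
    ∑ i, (∏ j ∈ univ.erase i, (v i - v j))⁻¹ * (x - v i)⁻¹ = (∏ i, (x - v i))⁻¹ := by
  have h := Lagrange.eval_interpolate_not_at_node (s := (univ : Finset ι)) (v := v) (x := x) 1
    (fun i _ => hx i)
  rw [Lagrange.interpolate_one hv.injOn univ_nonempty, Polynomial.eval_one] at h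
  simp only [Lagrange.eval_nodal, Lagrange.nodalWeight, Pi.one_apply, mul_one] at h
  have h2 := (eq_inv_of_mul_eq_one_right h.symm).symm
  simp only [Finset.prod_inv_distrib] at h2 ⊢
  exact h2.symm

lemma prod_ite_one_erase {α : Type*} [Fintype α] [DecidableEq α] (f : α → ℂ) (l : α) :
    ∏ r, (if r = l then 1 else f r) = ∏ r ∈ univ.erase l, f r := by
  rw [← Finset.mul_prod_erase univ _ (mem_univ l), if_pos rfl, one_mul]
  exact prod_congr rfl fun r hr => if_neg (mem_erase.mp hr).1

lemma prod_erase_castAdd {p q : ℕ} (f : Fin (p + q) → ℂ) (j : Fin p) :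
    ∏ r ∈ univ.erase (Fin.castAdd q j), f r
      = (∏ i ∈ univ.erase j, f (Fin.castAdd q i)) * ∏ i : Fin q, f (Fin.natAdd p i) := by
  rw [← prod_ite_one_erase, Fin.prod_univ_add, ← prod_ite_one_erase]
  congr 1
  · refine prod_congr rfl fun i _ => ?_
    congr 1
    simp [Fin.ext_iff]
  · refine prod_congr rfl fun i _ => if_neg ?_
    simp only [Fin.ext_iff, Fin.coe_natAdd, Fin.coe_castAdd]
    omega

lemma prod_erase_natAdd {p q : ℕ} (f : Fin (p + q) → ℂ) (k : Fin q) :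
    ∏ r ∈ univ.erase (Fin.natAdd p k), f r
      = (∏ i : Fin p, f (Fin.castAdd q i)) * ∏ i ∈ univ.erase k, f (Fin.natAdd p i) := by
  rw [← prod_ite_one_erase, Fin.prod_univ_add, ← prod_ite_one_erase]
  congr 1
  · refine prod_congr rfl fun i _ => if_neg ?_
    simp only [Fin.ext_iff, Fin.coe_natAdd, Fin.coe_castAdd]
    omega
  · refine prod_congr rfl fun i _ => ?_
    congr 1
    simp [Fin.ext_iff]

lemma conv_exp (y : ℝ) (a b : ℂ) (hab : a ≠ b) :
    (∫ t in (0:ℝ)..y, Complex.exp (a * t) * Complex.exp (b * ((y - t : ℝ) : ℂ)))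
      = (Complex.exp (a * y) - Complex.exp (b * y)) / (a - b) := by
  have h1 : ∀ t : ℝ, Complex.exp (a * t) * Complex.exp (b * ((y - t : ℝ) : ℂ))
      = Complex.exp (b * y) * Complex.exp ((a - b) * t) := by
    intro t
    rw [← Complex.exp_add, ← Complex.exp_add]
    push_cast
    ring_nf
  simp only [h1]
  rw [intervalIntegral.integral_const_mul, integral_exp_mul_complex (sub_ne_zero.mpr hab)]
  rw [Complex.ofReal_zero, mul_zero, Complex.exp_zero, mul_div_assoc']
  congr 1
  rw [mul_sub, mul_one, ← Complex.exp_add]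
  ring_nf

theorem stmt_13 (n m : ℕ) (hm : 0 < m) (μ : Fin (n + 1 + m) → ℂ)
    (hinj : Function.Injective μ) (y : ℝ) :
    ∫ t in (0 : ℝ)..y,
        fundPhiC (fun i : Fin (n + 1) => μ (Fin.castAdd m i)) t *
          fundPhiC (fun i : Fin m => μ (Fin.natAdd (n + 1) i)) (y - t)
      = fundPhiC μ y := by
  have : Nonempty (Fin m) := Fin.pos_iff_nonempty.mp hm
  set a : Fin (n + 1) → ℂ := fun i => μ (Fin.castAdd m i) with ha
  set b : Fin m → ℂ := fun i => μ (Fin.natAdd (n + 1) i) with hb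
  have hA : Function.Injective a := fun i j h => by
    have h2 := hinj h
    simpa [Fin.ext_iff] using h2
  have hB : Function.Injective b := fun i j h => by
    have h2 := hinj h
    simpa [Fin.ext_iff] using h2
  have hab : ∀ j k, a j ≠ b k := by
    intro j k h
    have h2 := hinj h
    simp only [Fin.ext_iff, Fin.coe_castAdd, Fin.coe_natAdd] at h2
    omega
  have key1 : ∀ j : Fin (n + 1),
      ∑ k : Fin m, (∏ l ∈ univ.erase k, (b k - b l))⁻¹ * (a j - b k)⁻¹
        = (∏ k : Fin m, (a j - b k))⁻¹ := fun j => pf_aux b hB (a j) (fun k => hab j k)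
  have key2 : ∀ k : Fin m,
      ∑ j : Fin (n + 1), (∏ l ∈ univ.erase j, (a j - a l))⁻¹ * (b k - a j)⁻¹
        = (∏ j : Fin (n + 1), (b k - a j))⁻¹ := fun k => pf_aux a hA (b k) (fun j => (hab j k).symm)
  have step1 : ∀ t : ℝ, fundPhiC a t * fundPhiC b (y - t)
      = ∑ p : Fin (n + 1) × Fin m,
          ((∏ l ∈ univ.erase p.1, (a p.1 - a l))⁻¹ * (∏ l ∈ univ.erase p.2, (b p.2 - b l))⁻¹) *
            (Complex.exp (a p.1 * t) * Complex.exp (b p.2 * ((y - t : ℝ) : ℂ))) := by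
    intro t
    rw [fundPhiC, fundPhiC, Finset.sum_mul_sum, Fintype.sum_prod_type]
    refine sum_congr rfl fun j _ => sum_congr rfl fun k _ => ?_
    rw [div_mul_div_comm, div_eq_mul_inv, mul_inv]
    apply mul_comm
  calc ∫ t in (0 : ℝ)..y, fundPhiC a t * fundPhiC b (y - t)
      = ∑ p : Fin (n + 1) × Fin m,
          ((∏ l ∈ univ.erase p.1, (a p.1 - a l))⁻¹ * (∏ l ∈ univ.erase p.2, (b p.2 - b l))⁻¹) *
            ((Complex.exp (a p.1 * y) - Complex.exp (b p.2 * y)) / (a p.1 - b p.2)) := by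
        simp only [step1]
        rw [intervalIntegral.integral_finset_sum]
        · exact sum_congr rfl fun p _ => by
            rw [intervalIntegral.integral_const_mul, conv_exp y _ _ (hab p.1 p.2)]
        · intro p _
          apply Continuous.intervalIntegrable
          fun_prop
    _ = ∑ j : Fin (n + 1), ∑ k : Fin m,
          ((Complex.exp (a j * y) * (∏ l ∈ univ.erase j, (a j - a l))⁻¹) *
              ((∏ l ∈ univ.erase k, (b k - b l))⁻¹ * (a j - b k)⁻¹)
            + (Complex.exp (b k * y) * (∏ l ∈ univ.erase k, (b k - b l))⁻¹) *
              ((∏ l ∈ univ.erase j, (a j - a l))⁻¹ * (b k - a j)⁻¹)) := by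
        rw [Fintype.sum_prod_type]
        refine sum_congr rfl fun j _ => sum_congr rfl fun k _ => ?_
        have h : (b k - a j)⁻¹ = -(a j - b k)⁻¹ := by
          rw [show b k - a j = -(a j - b k) from by ring, inv_neg]
        rw [h, div_eq_mul_inv]
        ring
    _ = (∑ j : Fin (n + 1), (Complex.exp (a j * y) * (∏ l ∈ univ.erase j, (a j - a l))⁻¹) *
            ∑ k : Fin m, (∏ l ∈ univ.erase k, (b k - b l))⁻¹ * (a j - b k)⁻¹)
        + ∑ k : Fin m, (Complex.exp (b k * y) * (∏ l ∈ univ.erase k, (b k - b l))⁻¹) *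
            ∑ j : Fin (n + 1), (∏ l ∈ univ.erase j, (a j - a l))⁻¹ * (b k - a j)⁻¹ := by
        simp only [Finset.sum_add_distrib]
        congr 1
        · exact sum_congr rfl fun j _ => by rw [Finset.mul_sum]
        · rw [Finset.sum_comm]
          exact sum_congr rfl fun k _ => by rw [Finset.mul_sum]
    _ = (∑ j : Fin (n + 1), (Complex.exp (a j * y) * (∏ l ∈ univ.erase j, (a j - a l))⁻¹) *
            (∏ k : Fin m, (a j - b k))⁻¹)
        + ∑ k : Fin m, (Complex.exp (b k * y) * (∏ l ∈ univ.erase k, (b k - b l))⁻¹) *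
            (∏ j : Fin (n + 1), (b k - a j))⁻¹ := by
        congr 1
        · exact sum_congr rfl fun j _ => by rw [key1 j]
        · exact sum_congr rfl fun k _ => by rw [key2 k]
    _ = fundPhiC μ y := by
        conv_rhs => rw [fundPhiC, Fin.sum_univ_add]
        congr 1
        · refine sum_congr rfl fun j _ => ?_
          rw [prod_erase_castAdd (fun r => μ (Fin.castAdd m j) - μ r) j]
          rw [div_eq_mul_inv, mul_inv]
          simp only [ha, hb]
          ring
        · refine sum_congr rfl fun k _ => ?_
          rw [prod_erase_natAdd (fun r => μ (Fin.natAdd (n + 1) k) - μ r) k]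
          rw [div_eq_mul_inv, mul_inv]
          simp only [ha, hb]
          ring
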